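/- Let L > 0, C > 0 and let u : [0,L] → ℝ³ be smooth. For each N ∈ ℕ let 0 = s₀^N < s₁^N < … < s_N^N = L be nodes satisfying |s_i^N − s_{i−1}^N − L/N| ≤ C·(L/N)³ for all i = 1,…,N. Then lim_{N→∞} (L/N)·Σ_{i=1}^{N−1} |(u(s_{i−1}^N) − 2u(s_i^N) + u(s_{i+1}^N))·(N/L)²|² = ∫₀^L |u''(s)|² ds. -/

import Mathlib

open Set

lemma abs_sub_le_of_mem_uIcc {m t y : ℝ} (hy : y ∈ uIcc m t) : |y - m| ≤ |t - m| := by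
  rcases le_total m t with h | h
  · rw [uIcc_of_le h] at hy
    rw [abs_of_nonneg (by linarith [hy.1]), abs_of_nonneg (by linarith)]
    linarith [hy.2]
  · rw [uIcc_of_ge h] at hy
    rw [abs_of_nonpos (by linarith [hy.2]), abs_of_nonpos (by linarith)]
    linarith [hy.1]

lemma taylor2_bound {E : Type*} [NormedAddCommGroup E] [NormedSpace ℝ E]
    {f f1 f2 f3 : ℝ → E} {S : Set ℝ} (hconv : Convex ℝ S)
    (h1 : ∀ x ∈ S, HasDerivWithinAt f (f1 x) S x)
    (h2 : ∀ x ∈ S, HasDerivWithinAt f1 (f2 x) S x)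
    (h3 : ∀ x ∈ S, HasDerivWithinAt f2 (f3 x) S x)
    {M : ℝ} (hM : ∀ x ∈ S, ‖f3 x‖ ≤ M)
    {m t : ℝ} (hm : m ∈ S) (ht : t ∈ S) :
    ‖f t - f m - (t - m) • f1 m - ((t - m)^2 / 2) • f2 m‖ ≤ M * |t - m|^3 := by
  have hM0 : 0 ≤ M := le_trans (norm_nonneg _) (hM m hm)
  have hT : uIcc m t ⊆ S := by
    rw [← segment_eq_uIcc]
    exact hconv.segment_subset hm ht
  -- Step A
  have hA : ∀ x ∈ uIcc m t, ‖f2 x - f2 m‖ ≤ M * |x - m| := by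
    intro x hx
    have := Convex.norm_image_sub_le_of_norm_hasDerivWithin_le
      (f := f2) (f' := f3) (s := uIcc m t)
      (fun y hy => (h3 y (hT hy)).mono hT) (fun y hy => hM y (hT hy))
      (convex_uIcc m t) left_mem_uIcc hx
    simpa [Real.norm_eq_abs] using this
  -- Step B
  set g1 : ℝ → E := fun x => f1 x - f1 m - (x - m) • f2 m with hg1
  have hg1d : ∀ x ∈ uIcc m t, HasDerivWithinAt g1 (f2 x - f2 m) (uIcc m t) x := by
    intro x hx
    have hlin : HasDerivWithinAt (fun y : ℝ => (y - m) • f2 m) (f2 m) (uIcc m t) x := by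
      have := (((hasDerivAt_id x).sub_const m).smul_const (f2 m)).hasDerivWithinAt
        (s := uIcc m t)
      simpa using this
    exact (((h2 x (hT hx)).mono hT).sub_const (f1 m)).sub hlin
  have hB : ∀ x ∈ uIcc m t, ‖g1 x‖ ≤ M * |t - m| * |x - m| := by
    intro x hx
    have hTx : uIcc m x ⊆ uIcc m t := uIcc_subset_uIcc left_mem_uIcc hx
    have := Convex.norm_image_sub_le_of_norm_hasDerivWithin_le
      (f := g1) (f' := fun y => f2 y - f2 m) (s := uIcc m x)
      (fun y hy => (hg1d y (hTx hy)).mono hTx)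
      (fun y hy => le_trans (hA y (hTx hy))
        (mul_le_mul_of_nonneg_left
          (le_trans (abs_sub_le_of_mem_uIcc hy) (abs_sub_le_of_mem_uIcc hx)) hM0))
      (convex_uIcc _ _) left_mem_uIcc right_mem_uIcc
    have hg1m : g1 m = 0 := by simp [hg1]
    simpa [hg1m, Real.norm_eq_abs] using this
  -- Step C
  set g0 : ℝ → E := fun x => f x - f m - (x - m) • f1 m - ((x - m)^2 / 2) • f2 m with hg0
  have hg0d : ∀ x ∈ uIcc m t, HasDerivWithinAt g0 (g1 x) (uIcc m t) x := by
    intro x hx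
    have hlin : HasDerivWithinAt (fun y : ℝ => (y - m) • f1 m) (f1 m) (uIcc m t) x := by
      have := (((hasDerivAt_id x).sub_const m).smul_const (f1 m)).hasDerivWithinAt
        (s := uIcc m t)
      simpa using this
    have hquad : HasDerivWithinAt (fun y : ℝ => ((y - m)^2 / 2) • f2 m)
        ((x - m) • f2 m) (uIcc m t) x := by
      have h' : HasDerivAt (fun y : ℝ => (y - m)^2 / 2) (x - m) x := by
        have := (((hasDerivAt_id x).sub_const m).pow 2).div_const 2
        exact this.congr_deriv (by simp only [id]; ring)
      have := (h'.smul_const (f2 m)).hasDerivWithinAt (s := uIcc m t)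
      simpa using this
    have := ((((h1 x (hT hx)).mono hT).sub_const (f m)).sub hlin).sub hquad
    convert this using 1
    rfl
  have := Convex.norm_image_sub_le_of_norm_hasDerivWithin_le
    (f := g0) (f' := g1) (s := uIcc m t)
    hg0d
    (fun y hy => le_trans (hB y hy)
      (mul_le_mul_of_nonneg_left (abs_sub_le_of_mem_uIcc hy) (by positivity)))
    (convex_uIcc _ _) left_mem_uIcc right_mem_uIcc
  have hg0m : g0 m = 0 := by simp [hg0]
  have hg0t : g0 t = f t - f m - (t - m) • f1 m - ((t - m)^2 / 2) • f2 m := rfl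
  calc ‖f t - f m - (t - m) • f1 m - ((t - m)^2 / 2) • f2 m‖
      ≤ M * |t - m| * |t - m| * ‖t - m‖ := by
        rw [← hg0t]; simpa [hg0m] using this
    _ = M * |t - m|^3 := by rw [Real.norm_eq_abs]; ring

open MeasureTheory Filter Topology

set_option maxHeartbeats 4000000 in
/-- convergence of the discrete bending energy (centered second difference
quotients at almost equidistant nodes) to `∫₀^L |u''|²` for a smooth curve `u`. -/
theorem stmt17 (L C : ℝ) (hL : 0 < L) (hC : 0 < C)
    (u : ℝ → EuclideanSpace ℝ (Fin 3))
    (hu : ContDiffOn ℝ (⊤ : ℕ∞) u (Icc 0 L))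
    (s : ℕ → ℕ → ℝ)
    (hs0 : ∀ N : ℕ, 1 ≤ N → s N 0 = 0)
    (hsN : ∀ N : ℕ, 1 ≤ N → s N N = L)
    (hmono : ∀ N : ℕ, 1 ≤ N → ∀ i, i < N → s N i < s N (i + 1))
    (hclose : ∀ N : ℕ, 1 ≤ N → ∀ i, 1 ≤ i → i ≤ N →
      |s N i - s N (i - 1) - L / N| ≤ C * (L / N) ^ 3) :
    Filter.Tendsto
      (fun N : ℕ => (L / N) * ∑ i ∈ Finset.Icc 1 (N - 1),
        ‖(((N : ℝ) / L) ^ 2) •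
          (u (s N (i - 1)) - (2:ℝ) • u (s N i) + u (s N (i + 1)))‖ ^ 2)
      atTop (𝓝 (∫ σ in (0:ℝ)..L, ‖iteratedDerivWithin 2 u (Icc 0 L) σ‖ ^ 2)) := by
  have hUD : UniqueDiffOn ℝ (Icc (0:ℝ) L) := uniqueDiffOn_Icc hL
  set S : Set ℝ := Icc (0:ℝ) L with hSdef
  set f1 := iteratedDerivWithin 1 u S with hf1def
  set f2 := iteratedDerivWithin 2 u S with hf2def
  set f3 := iteratedDerivWithin 3 u S with hf3def
  have hder : ∀ n : ℕ, ∀ x ∈ S, HasDerivWithinAt (iteratedDerivWithin n u S)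
      (iteratedDerivWithin (n+1) u S x) S x := by
    intro n x hx
    have hdiff : DifferentiableOn ℝ (iteratedDerivWithin n u S) S :=
      hu.differentiableOn_iteratedDerivWithin (by exact_mod_cast ENat.coe_lt_top n) hUD
    have := (hdiff x hx).hasDerivWithinAt
    rwa [← iteratedDerivWithin_succ] at this
  have hd0 : ∀ x ∈ S, HasDerivWithinAt u (f1 x) S x := by
    intro x hx
    have := hder 0 x hx
    rwa [iteratedDerivWithin_zero] at this
  have hd1 : ∀ x ∈ S, HasDerivWithinAt f1 (f2 x) S x := hder 1
  have hd2 : ∀ x ∈ S, HasDerivWithinAt f2 (f3 x) S x := hder 2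
  have hbnd : ∀ n : ℕ, ∃ M : ℝ, 0 ≤ M ∧ ∀ x ∈ S, ‖iteratedDerivWithin n u S x‖ ≤ M := by
    intro n
    obtain ⟨M, hM⟩ := isCompact_Icc.exists_bound_of_continuousOn
      (hu.continuousOn_iteratedDerivWithin (le_of_lt (by exact_mod_cast ENat.coe_lt_top n)) hUD)
    exact ⟨max M 0, le_max_right _ _, fun x hx => (hM x hx).trans (le_max_left _ _)⟩
  obtain ⟨M1, hM1n, hM1⟩ := hbnd 1
  obtain ⟨M2, hM2n, hM2⟩ := hbnd 2
  obtain ⟨M3, hM3n, hM3⟩ := hbnd 3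
  set g : ℝ → ℝ := fun σ => ‖f2 σ‖ ^ 2 with hgdef
  set I : ℝ := ∫ σ in (0:ℝ)..L, g σ with hI
  have hcont : ∀ n : ℕ, ContinuousOn (iteratedDerivWithin n u S) S := fun n =>
    hu.continuousOn_iteratedDerivWithin (le_of_lt (by exact_mod_cast ENat.coe_lt_top n)) hUD
  have hgc : ContinuousOn g S := ((hcont 2).norm).pow 2
  have hgint : ∀ a b, a ∈ S → b ∈ S → IntervalIntegrable g volume a b := by
    intro a b ha hb
    exact (hgc.mono (uIcc_subset_Icc ha hb)).intervalIntegrable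
  have hgb : ∀ x ∈ S, |g x| ≤ M2 ^ 2 := by
    intro x hx
    rw [hgdef]
    simp only [abs_pow, abs_norm]
    exact pow_le_pow_left₀ (norm_nonneg _) (hM2 x hx) 2
  have hf2lip : ∀ x ∈ S, ∀ y ∈ S, ‖f2 x - f2 y‖ ≤ M3 * |x - y| := by
    intro x hx y hy
    have := Convex.norm_image_sub_le_of_norm_hasDerivWithin_le hd2 hM3 (convex_Icc 0 L) hy hx
    simpa [Real.norm_eq_abs] using this
  have hglip : ∀ x ∈ S, ∀ y ∈ S, |g x - g y| ≤ 2 * M2 * M3 * |x - y| := by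
    intro x hx y hy
    have h1 : |‖f2 x‖ - ‖f2 y‖| ≤ M3 * |x - y| :=
      (abs_norm_sub_norm_le _ _).trans (hf2lip x hx y hy)
    have hident : g x - g y = (‖f2 x‖ - ‖f2 y‖) * (‖f2 x‖ + ‖f2 y‖) := by
      simp only [hgdef]; ring
    rw [hident, abs_mul]
    calc |‖f2 x‖ - ‖f2 y‖| * |‖f2 x‖ + ‖f2 y‖| ≤ (M3 * |x - y|) * (2 * M2) := by
          apply mul_le_mul h1 _ (abs_nonneg _) (by positivity)
          rw [abs_of_nonneg (by positivity)]
          linarith [hM2 x hx, hM2 y hy]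
      _ = 2 * M2 * M3 * |x - y| := by ring
  set K1 : ℝ := 16 * M3 + 2 * C * M1 + 3 * C * L * M2 with hK1
  have hK1n : 0 ≤ K1 := by
    rw [hK1]
    have a1 := mul_nonneg hC.le hM1n
    have a2 := mul_nonneg (mul_nonneg hC.le hL.le) hM2n
    linarith only [hM3n, a1, a2]
  set K2 : ℝ := K1 * (2 * M2 + K1 * L) with hK2
  have hK2n : 0 ≤ K2 := by
    rw [hK2]
    refine mul_nonneg hK1n ?_
    have a1 := mul_nonneg hK1n hL.le
    linarith only [hM2n, a1]
  set K3 : ℝ := C * L * M2 ^ 2 + 8 * M2 * M3 with hK3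
  have hK3n : 0 ≤ K3 := by
    rw [hK3]
    have a1 := mul_nonneg (mul_nonneg hC.le hL.le) (pow_nonneg hM2n 2)
    have a2 := mul_nonneg hM2n hM3n
    linarith only [a1, a2]
  set Ktot : ℝ := L * (K2 + K3) + 2 * M2 ^ 2 with hKtot
  have taylor : ∀ m t, m ∈ S → t ∈ S →
      ‖u t - u m - (t - m) • f1 m - ((t - m) ^ 2 / 2) • f2 m‖ ≤ M3 * |t - m| ^ 3 :=
    fun m t hm ht => taylor2_bound (convex_Icc 0 L) hd0 hd1 hd2 hM3 hm ht
  have key : ∀ N : ℕ, 1 ≤ N → C * (L / N) ^ 2 ≤ 1 →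
      |(L / N) * (∑ i ∈ Finset.Icc 1 (N - 1),
        ‖(((N : ℝ) / L) ^ 2) •
          (u (s N (i - 1)) - (2:ℝ) • u (s N i) + u (s N (i + 1)))‖ ^ 2) - I|
        ≤ Ktot * (L / N) := by
    intro N hN1 hCsm
    set h : ℝ := L / N with hhdef
    have hN0 : (0:ℝ) < N := by exact_mod_cast hN1
    have hh0 : 0 < h := div_pos hL hN0
    have hN1' : (1:ℝ) ≤ N := by exact_mod_cast hN1
    have hhL : h ≤ L := by
      rw [hhdef, div_le_iff₀ hN0]
      calc L = L * 1 := (mul_one L).symm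
        _ ≤ L * N := mul_le_mul_of_nonneg_left hN1' hL.le
    have hCh : C * h ^ 3 ≤ h := by
      calc C * h ^ 3 = (C * h ^ 2) * h := by ring
        _ ≤ 1 * h := mul_le_mul_of_nonneg_right hCsm hh0.le
        _ = h := one_mul h
    -- node facts
    have mono' : ∀ j, j ≤ N → ∀ i, i ≤ j → s N i ≤ s N j := by
      intro j
      induction j with
      | zero =>
        intro _ i hi
        obtain rfl := Nat.le_zero.mp hi
        exact le_refl _
      | succ j ih =>
        intro hj i hi
        rcases Nat.eq_or_lt_of_le hi with rfl | hij
        · exact le_refl _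
        · exact le_trans (ih (by omega) i (by omega)) (hmono N hN1 j (by omega)).le
    have memS : ∀ i, i ≤ N → s N i ∈ S := by
      intro i hi
      rw [hSdef, Set.mem_Icc]
      constructor
      · rw [← hs0 N hN1]; exact mono' i hi 0 (Nat.zero_le _)
      · rw [← hsN N hN1]; exact mono' N le_rfl i hi
    have hΔc : ∀ k, k < N → |s N (k+1) - s N k - h| ≤ C * h ^ 3 := by
      intro k hk
      have := hclose N hN1 (k+1) (by omega) (by omega)
      simpa [Nat.add_sub_cancel, ← hhdef] using this
    have hΔub : ∀ k, k < N → s N (k+1) - s N k ≤ 2 * h := by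
      intro k hk
      have h1 := (abs_le.mp (hΔc k hk)).2
      linarith only [h1, hCh]
    have hΔpos : ∀ k, k < N → 0 ≤ s N (k+1) - s N k := fun k hk => by
      linarith only [hmono N hN1 k hk]
    -- per-term estimate
    have term_est : ∀ k, k + 1 < N →
        |h * ‖(((N : ℝ) / L) ^ 2) •
            (u (s N k) - (2:ℝ) • u (s N (k+1)) + u (s N (k+2)))‖ ^ 2
          - ∫ σ in (s N k)..(s N (k+1)), g σ| ≤ (K2 + K3) * h ^ 2 := by
      intro k hk
      have hkN : k < N := by omega
      set a := s N k with ha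
      set m := s N (k+1) with hm
      set b := s N (k+2) with hb
      have haS := memS k (by omega)
      have hmS := memS (k+1) (by omega)
      have hbS := memS (k+2) (by omega)
      have ham : a ≤ m := (hmono N hN1 k hkN).le
      have hmb : m ≤ b := by
        have := (hmono N hN1 (k+1) hk).le
        simpa [hm, hb] using this
      have hΔ1 := hΔc k hkN
      have hΔ2 := hΔc (k+1) hk
      have hU1 := hΔub k hkN
      have hU2 := hΔub (k+1) hk
      have e1 := abs_le.mp hΔ1
      have e2 := abs_le.mp hΔ2
      -- Taylor remainders
      have hRm := taylor m a hmS haS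
      have hRp := taylor m b hmS hbS
      have hαabs : |a - m| ≤ 2 * h := by
        rw [abs_of_nonpos (by linarith only [ham])]; linarith only [hU1]
      have hβabs : |b - m| ≤ 2 * h := by
        rw [abs_of_nonneg (by linarith only [hmb])]; linarith only [hU2]
      have hcube : ∀ x : ℝ, |x| ≤ 2 * h → M3 * |x| ^ 3 ≤ 8 * M3 * h ^ 3 := by
        intro x hx
        have h3 : |x| ^ 3 ≤ (2 * h) ^ 3 := pow_le_pow_left₀ (abs_nonneg x) hx 3
        calc M3 * |x| ^ 3 ≤ M3 * (2 * h) ^ 3 := mul_le_mul_of_nonneg_left h3 hM3n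
          _ = 8 * M3 * h ^ 3 := by ring
      have hsum : |(b - m) + (a - m)| ≤ 2 * C * h ^ 3 := by
        rw [abs_le]
        constructor <;> linarith only [e1.1, e1.2, e2.1, e2.2]
      have hquad : |((a - m) ^ 2 + (b - m) ^ 2) / 2 - h ^ 2| ≤ 3 * C * h ^ 4 := by
        have q1 : |(m - a) ^ 2 - h ^ 2| ≤ 3 * C * h ^ 4 := by
          have hid : (m - a) ^ 2 - h ^ 2 = ((m - a) - h) * ((m - a) + h) := by ring
          rw [hid, abs_mul]
          have hplus : |(m - a) + h| ≤ 3 * h := by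
            rw [abs_of_nonneg (by linarith only [hΔpos k hkN, hh0.le])]
            linarith only [e1.2, hCh]
          calc |m - a - h| * |m - a + h| ≤ (C * h ^ 3) * (3 * h) :=
              mul_le_mul hΔ1 hplus (abs_nonneg _) (by positivity)
            _ = 3 * C * h ^ 4 := by ring
        have q2 : |(b - m) ^ 2 - h ^ 2| ≤ 3 * C * h ^ 4 := by
          have hid : (b - m) ^ 2 - h ^ 2 = ((b - m) - h) * ((b - m) + h) := by ring
          rw [hid, abs_mul]
          have hplus : |(b - m) + h| ≤ 3 * h := by
            rw [abs_of_nonneg (by linarith only [hΔpos (k+1) hk, hh0.le])]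
            linarith only [e2.2, hCh]
          calc |b - m - h| * |b - m + h| ≤ (C * h ^ 3) * (3 * h) :=
              mul_le_mul hΔ2 hplus (abs_nonneg _) (by positivity)
            _ = 3 * C * h ^ 4 := by ring
        have hid2 : ((a - m) ^ 2 + (b - m) ^ 2) / 2 - h ^ 2
            = (((m - a) ^ 2 - h ^ 2) + ((b - m) ^ 2 - h ^ 2)) / 2 := by ring
        rw [hid2, abs_div, abs_two]
        have habs := abs_add_le ((m - a) ^ 2 - h ^ 2) ((b - m) ^ 2 - h ^ 2)
        linarith only [habs, q1, q2]
      -- claim 1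
      have decomp : u a - (2:ℝ) • u m + u b - (h ^ 2) • f2 m
          = (u a - u m - (a - m) • f1 m - ((a - m) ^ 2 / 2) • f2 m)
            + (u b - u m - (b - m) • f1 m - ((b - m) ^ 2 / 2) • f2 m)
            + ((b - m) + (a - m)) • f1 m
            + (((a - m) ^ 2 + (b - m) ^ 2) / 2 - h ^ 2) • f2 m := by
        module
      have claim1 : ‖u a - (2:ℝ) • u m + u b - (h ^ 2) • f2 m‖ ≤ K1 * h ^ 3 := by
        rw [decomp]
        refine le_trans (norm_add_le _ _) ?_
        refine le_trans (add_le_add_left (norm_add_le _ _) _) ?_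
        refine le_trans (add_le_add_left (add_le_add_left (norm_add_le _ _) _) _) ?_
        rw [norm_smul, norm_smul, Real.norm_eq_abs, Real.norm_eq_abs]
        have b1 : ‖u a - u m - (a - m) • f1 m - ((a - m) ^ 2 / 2) • f2 m‖ ≤ 8 * M3 * h ^ 3 :=
          le_trans hRm (hcube _ hαabs)
        have b2 : ‖u b - u m - (b - m) • f1 m - ((b - m) ^ 2 / 2) • f2 m‖ ≤ 8 * M3 * h ^ 3 :=
          le_trans hRp (hcube _ hβabs)
        have b3 : |(b - m) + (a - m)| * ‖f1 m‖ ≤ (2 * C * h ^ 3) * M1 :=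
          mul_le_mul hsum (hM1 m hmS) (norm_nonneg _) (by positivity)
        have b4 : |((a - m) ^ 2 + (b - m) ^ 2) / 2 - h ^ 2| * ‖f2 m‖ ≤ (3 * C * h ^ 4) * M2 :=
          mul_le_mul hquad (hM2 m hmS) (norm_nonneg _) (by positivity)
        have b5 : (3 * C * h ^ 4) * M2 ≤ 3 * C * L * M2 * h ^ 3 := by
          have hnn : 0 ≤ 3 * C * M2 * h ^ 3 :=
            mul_nonneg (mul_nonneg (mul_nonneg (by norm_num) hC.le) hM2n)
              (pow_nonneg hh0.le 3)
          calc (3 * C * h ^ 4) * M2 = (3 * C * M2 * h ^ 3) * h := by ring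
            _ ≤ (3 * C * M2 * h ^ 3) * L := mul_le_mul_of_nonneg_left hhL hnn
            _ = 3 * C * L * M2 * h ^ 3 := by ring
        rw [hK1]
        linarith only [b1, b2, b3, b4, b5]
      -- claim 2
      have hh2 : (h:ℝ) ^ 2 ≠ 0 := by positivity
      have hNL2 : ((N : ℝ) / L) ^ 2 = (h ^ 2)⁻¹ := by
        rw [hhdef]
        field_simp
      have claim2 : ‖(((N : ℝ) / L) ^ 2) • (u a - (2:ℝ) • u m + u b) - f2 m‖ ≤ K1 * h := by
        have hid : (((N : ℝ) / L) ^ 2) • (u a - (2:ℝ) • u m + u b) - f2 m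
            = (h ^ 2)⁻¹ • (u a - (2:ℝ) • u m + u b - (h ^ 2) • f2 m) := by
          rw [hNL2, smul_sub, smul_smul, inv_mul_cancel₀ hh2, one_smul]
        rw [hid, norm_smul, Real.norm_eq_abs, abs_of_pos (by positivity : (0:ℝ) < (h^2)⁻¹)]
        calc (h ^ 2)⁻¹ * ‖u a - (2:ℝ) • u m + u b - (h ^ 2) • f2 m‖
            ≤ (h ^ 2)⁻¹ * (K1 * h ^ 3) := by
              exact mul_le_mul_of_nonneg_left claim1 (by positivity)
          _ = K1 * h := by field_simp
      set D := (((N : ℝ) / L) ^ 2) • (u a - (2:ℝ) • u m + u b) with hD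
      have hDn : ‖D‖ ≤ M2 + K1 * L := by
        have hle : ‖D‖ ≤ ‖f2 m‖ + ‖D - f2 m‖ := by
          calc ‖D‖ = ‖f2 m + (D - f2 m)‖ := by congr 1; abel
            _ ≤ ‖f2 m‖ + ‖D - f2 m‖ := norm_add_le _ _
        have h2 : K1 * h ≤ K1 * L := mul_le_mul_of_nonneg_left hhL hK1n
        linarith only [hM2 m hmS, claim2, hle, h2]
      have claim3 : |‖D‖ ^ 2 - g m| ≤ K2 * h := by
        have hident : ‖D‖ ^ 2 - g m = (‖D‖ - ‖f2 m‖) * (‖D‖ + ‖f2 m‖) := by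
          simp only [hgdef]; ring
        rw [hident, abs_mul]
        have e3 : |‖D‖ - ‖f2 m‖| ≤ K1 * h := le_trans (abs_norm_sub_norm_le _ _) claim2
        have e4 : |‖D‖ + ‖f2 m‖| ≤ 2 * M2 + K1 * L := by
          rw [abs_of_nonneg (by positivity)]
          linarith only [hM2 m hmS, hDn]
        calc |‖D‖ - ‖f2 m‖| * |‖D‖ + ‖f2 m‖| ≤ (K1 * h) * (2 * M2 + K1 * L) :=
            mul_le_mul e3 e4 (abs_nonneg _) (by positivity)
          _ = K2 * h := by rw [hK2]; ring
      -- claim 4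
      have hint : IntervalIntegrable g volume a m := hgint a m haS hmS
      have claim4 : |h * g m - ∫ σ in a..m, g σ| ≤ K3 * h ^ 2 := by
        have hsplit : (∫ σ in a..m, g σ) = (∫ σ in a..m, (g σ - g m)) + (m - a) * g m := by
          rw [intervalIntegral.integral_sub hint intervalIntegrable_const,
            intervalIntegral.integral_const, smul_eq_mul]
          ring
        have hbound : |∫ σ in a..m, (g σ - g m)| ≤ (2 * M2 * M3 * (2 * h)) * |m - a| := by
          have hb2 : ∀ σ ∈ Set.uIoc a m, ‖g σ - g m‖ ≤ 2 * M2 * M3 * (2 * h) := by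
            intro σ hσ
            rw [Set.uIoc_of_le ham] at hσ
            have hσS : σ ∈ S := by
              rw [hSdef, Set.mem_Icc] at haS hmS ⊢
              exact ⟨le_trans haS.1 hσ.1.le, le_trans hσ.2 hmS.2⟩
            have hlip := hglip σ hσS m hmS
            have hσm : |σ - m| ≤ 2 * h := by
              rw [abs_of_nonpos (by linarith only [hσ.2])]
              linarith only [hσ.1.le, hU1]
            calc ‖g σ - g m‖ = |g σ - g m| := Real.norm_eq_abs _
              _ ≤ 2 * M2 * M3 * |σ - m| := hlip
              _ ≤ 2 * M2 * M3 * (2 * h) := by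
                  apply mul_le_mul_of_nonneg_left hσm
                  positivity
          have := intervalIntegral.norm_integral_le_of_norm_le_const hb2
          rw [Real.norm_eq_abs] at this
          rw [abs_sub_comm m a] at this ⊢
          exact this
        have e0 : |m - a| ≤ 2 * h := by
          rw [abs_of_nonneg (by linarith only [ham])]; linarith only [hU1]
        have e5 : |∫ σ in a..m, (g σ - g m)| ≤ 8 * M2 * M3 * h ^ 2 := by
          have hnn : 0 ≤ 2 * M2 * M3 * (2 * h) :=
            mul_nonneg (mul_nonneg (mul_nonneg (by norm_num) hM2n) hM3n)
              (by linarith only [hh0.le])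
          calc |∫ σ in a..m, (g σ - g m)| ≤ (2 * M2 * M3 * (2 * h)) * |m - a| := hbound
            _ ≤ (2 * M2 * M3 * (2 * h)) * (2 * h) := mul_le_mul_of_nonneg_left e0 hnn
            _ = 8 * M2 * M3 * h ^ 2 := by ring
        have e6 : |h * g m - (m - a) * g m| ≤ C * h ^ 3 * M2 ^ 2 := by
          have hid : h * g m - (m - a) * g m = -((m - a - h)) * g m := by ring
          rw [hid, abs_mul, abs_neg]
          exact mul_le_mul hΔ1 (hgb m hmS) (abs_nonneg _) (by positivity)
        have hfin : h * g m - ∫ σ in a..m, g σ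
            = (h * g m - (m - a) * g m) - ∫ σ in a..m, (g σ - g m) := by
          rw [hsplit]; ring
        rw [hfin]
        have htri : |(h * g m - (m - a) * g m) - ∫ σ in a..m, (g σ - g m)|
            ≤ |h * g m - (m - a) * g m| + |∫ σ in a..m, (g σ - g m)| := abs_sub _ _
        have e7 : C * h ^ 3 * M2 ^ 2 ≤ C * L * M2 ^ 2 * h ^ 2 := by
          have hnn : 0 ≤ C * M2 ^ 2 * h ^ 2 :=
            mul_nonneg (mul_nonneg hC.le (pow_nonneg hM2n 2)) (pow_nonneg hh0.le 2)
          calc C * h ^ 3 * M2 ^ 2 = (C * M2 ^ 2 * h ^ 2) * h := by ring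
            _ ≤ (C * M2 ^ 2 * h ^ 2) * L := mul_le_mul_of_nonneg_left hhL hnn
            _ = C * L * M2 ^ 2 * h ^ 2 := by ring
        rw [hK3]
        linarith only [htri, e5, e6, e7]
      -- combine
      have hid3 : h * ‖D‖ ^ 2 - ∫ σ in a..m, g σ
          = h * (‖D‖ ^ 2 - g m) + (h * g m - ∫ σ in a..m, g σ) := by ring
      calc |h * ‖D‖ ^ 2 - ∫ σ in a..m, g σ|
          ≤ |h * (‖D‖ ^ 2 - g m)| + |h * g m - ∫ σ in a..m, g σ| := by
            rw [hid3]; exact abs_add_le _ _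
        _ ≤ h * (K2 * h) + K3 * h ^ 2 := by
            rw [abs_mul, abs_of_pos hh0]
            have := mul_le_mul_of_nonneg_left claim3 hh0.le
            linarith only [claim4, this]
        _ = (K2 + K3) * h ^ 2 := by ring
    -- reindex the sum
    have hre : (∑ i ∈ Finset.Icc 1 (N - 1),
          ‖(((N : ℝ) / L) ^ 2) •
            (u (s N (i - 1)) - (2:ℝ) • u (s N i) + u (s N (i + 1)))‖ ^ 2)
        = ∑ k ∈ Finset.range (N - 1),
          ‖(((N : ℝ) / L) ^ 2) •
            (u (s N k) - (2:ℝ) • u (s N (k+1)) + u (s N (k+2)))‖ ^ 2 := by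
      rw [show Finset.Icc 1 (N-1) = Finset.Ico 1 N by
            rw [← Finset.Ico_add_one_right_eq_Icc]; congr 1; omega,
        Finset.sum_Ico_eq_sum_range]
      apply Finset.sum_congr rfl
      intro k _
      have e1 : 1 + k - 1 = k := by omega
      have e3 : 1 + k + 1 = k + 2 := by omega
      have e2 : 1 + k = k + 1 := by omega
      rw [e1, e3, e2]
    -- telescoping
    have htel : (∑ k ∈ Finset.range N, ∫ σ in (s N k)..(s N (k+1)), g σ) = I := by
      rw [intervalIntegral.sum_integral_adjacent_intervals
        (fun k hk => hgint _ _ (memS k (by omega)) (memS (k+1) (by omega))),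
        hs0 N hN1, hsN N hN1, hI]
    have hsplitN : (∑ k ∈ Finset.range N, ∫ σ in (s N k)..(s N (k+1)), g σ)
        = (∑ k ∈ Finset.range (N-1), ∫ σ in (s N k)..(s N (k+1)), g σ)
          + ∫ σ in (s N (N-1))..(s N (N-1+1)), g σ := by
      have hrn : Finset.range N = Finset.range ((N-1)+1) := by congr 1; omega
      rw [hrn, Finset.sum_range_succ]
    -- last interval bound
    have hlastS := memS (N-1) (by omega)
    have hlastS' := memS (N-1+1) (by omega)
    have hΔlast := hΔub (N-1) (by omega)
    have hΔlast0 := hΔpos (N-1) (by omega)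
    have hlast : |∫ σ in (s N (N-1))..(s N (N-1+1)), g σ| ≤ 2 * M2 ^ 2 * h := by
      have hb2 : ∀ σ ∈ Set.uIoc (s N (N-1)) (s N (N-1+1)), ‖g σ‖ ≤ M2 ^ 2 := by
        intro σ hσ
        rw [Set.uIoc_of_le (by linarith only [hΔlast0])] at hσ
        have hσS : σ ∈ S := by
          rw [hSdef, Set.mem_Icc] at hlastS hlastS' ⊢
          exact ⟨le_trans hlastS.1 hσ.1.le, le_trans hσ.2 hlastS'.2⟩
        rw [Real.norm_eq_abs]
        exact hgb σ hσS
      have hb3 := intervalIntegral.norm_integral_le_of_norm_le_const hb2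
      rw [Real.norm_eq_abs] at hb3
      have habs : |s N (N-1+1) - s N (N-1)| ≤ 2 * h := by
        rw [abs_of_nonneg hΔlast0]; exact hΔlast
      calc |∫ σ in (s N (N-1))..(s N (N-1+1)), g σ|
          ≤ M2 ^ 2 * |s N (N-1+1) - s N (N-1)| := hb3
        _ ≤ M2 ^ 2 * (2 * h) := mul_le_mul_of_nonneg_left habs (by positivity)
        _ = 2 * M2 ^ 2 * h := by ring
    -- sum bound
    have hsb : |∑ k ∈ Finset.range (N-1),
          (h * ‖(((N : ℝ) / L) ^ 2) •
            (u (s N k) - (2:ℝ) • u (s N (k+1)) + u (s N (k+2)))‖ ^ 2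
            - ∫ σ in (s N k)..(s N (k+1)), g σ)|
        ≤ (N : ℝ) * ((K2 + K3) * h ^ 2) := by
      have h1 : (∑ k ∈ Finset.range (N-1),
            |h * ‖(((N : ℝ) / L) ^ 2) •
              (u (s N k) - (2:ℝ) • u (s N (k+1)) + u (s N (k+2)))‖ ^ 2
              - ∫ σ in (s N k)..(s N (k+1)), g σ|)
          ≤ (Finset.range (N-1)).card • ((K2 + K3) * h ^ 2) :=
        Finset.sum_le_card_nsmul _ _ _
          (fun k hk => term_est k (by
            have := Finset.mem_range.mp hk
            omega))
      rw [Finset.card_range, nsmul_eq_mul] at h1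
      have h2 : ((N - 1 : ℕ) : ℝ) ≤ (N : ℝ) := by exact_mod_cast Nat.sub_le N 1
      refine le_trans (Finset.abs_sum_le_sum_abs _ _) (le_trans h1 ?_)
      exact mul_le_mul_of_nonneg_right h2
        (mul_nonneg (by linarith only [hK2n, hK3n]) (pow_nonneg hh0.le 2))
    -- final assembly of key
    rw [hre, Finset.mul_sum, ← htel, hsplitN]
    have hid4 : (∑ k ∈ Finset.range (N-1),
          h * ‖(((N : ℝ) / L) ^ 2) •
            (u (s N k) - (2:ℝ) • u (s N (k+1)) + u (s N (k+2)))‖ ^ 2)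
        - ((∑ k ∈ Finset.range (N-1), ∫ σ in (s N k)..(s N (k+1)), g σ)
            + ∫ σ in (s N (N-1))..(s N (N-1+1)), g σ)
        = (∑ k ∈ Finset.range (N-1),
            (h * ‖(((N : ℝ) / L) ^ 2) •
              (u (s N k) - (2:ℝ) • u (s N (k+1)) + u (s N (k+2)))‖ ^ 2
              - ∫ σ in (s N k)..(s N (k+1)), g σ))
          - ∫ σ in (s N (N-1))..(s N (N-1+1)), g σ := by
      rw [Finset.sum_sub_distrib]
      ring
    rw [hid4]
    have hNh : (N : ℝ) * h = L := by
      rw [hhdef]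
      field_simp
    calc |(∑ k ∈ Finset.range (N-1),
            (h * ‖(((N : ℝ) / L) ^ 2) •
              (u (s N k) - (2:ℝ) • u (s N (k+1)) + u (s N (k+2)))‖ ^ 2
              - ∫ σ in (s N k)..(s N (k+1)), g σ))
          - ∫ σ in (s N (N-1))..(s N (N-1+1)), g σ|
        ≤ |∑ k ∈ Finset.range (N-1),
            (h * ‖(((N : ℝ) / L) ^ 2) •
              (u (s N k) - (2:ℝ) • u (s N (k+1)) + u (s N (k+2)))‖ ^ 2
              - ∫ σ in (s N k)..(s N (k+1)), g σ)|
          + |∫ σ in (s N (N-1))..(s N (N-1+1)), g σ| := abs_sub _ _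
      _ ≤ (N : ℝ) * ((K2 + K3) * h ^ 2) + 2 * M2 ^ 2 * h := add_le_add hsb hlast
      _ = (K2 + K3) * ((N : ℝ) * h) * h + 2 * M2 ^ 2 * h := by ring
      _ = Ktot * h := by rw [hNh, hKtot]; ring
  -- final assembly
  have hto : Tendsto (fun N : ℕ => Ktot * (L / N)) atTop (𝓝 0) := by
    have := tendsto_const_div_atTop_nhds_zero_nat (Ktot * L)
    simpa [mul_div_assoc] using this
  have hev : ∀ᶠ N : ℕ in atTop, C * (L / N) ^ 2 ≤ 1 := by
    have hbase : Tendsto (fun N : ℕ => L / (N : ℝ)) atTop (𝓝 0) :=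
      tendsto_const_div_atTop_nhds_zero_nat L
    have hsq : Tendsto (fun N : ℕ => C * (L / (N : ℝ)) ^ 2) atTop (𝓝 0) := by
      have := (hbase.pow 2).const_mul C
      simpa using this
    exact hsq.eventually (eventually_le_nhds (by norm_num : (0:ℝ) < 1))
  have hev2 : ∀ᶠ N : ℕ in atTop,
      |((L / N) * ∑ i ∈ Finset.Icc 1 (N - 1),
        ‖(((N : ℝ) / L) ^ 2) •
          (u (s N (i - 1)) - (2:ℝ) • u (s N i) + u (s N (i + 1)))‖ ^ 2) - I|
        ≤ Ktot * (L / N) := by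
    filter_upwards [hev, eventually_ge_atTop 1] with N h1 h2
    exact key N h2 h1
  have h0 : Tendsto (fun N : ℕ =>
      ((L / N) * ∑ i ∈ Finset.Icc 1 (N - 1),
        ‖(((N : ℝ) / L) ^ 2) •
          (u (s N (i - 1)) - (2:ℝ) • u (s N i) + u (s N (i + 1)))‖ ^ 2) - I)
      atTop (𝓝 0) := by
    apply squeeze_zero_norm' _ hto
    filter_upwards [hev2] with N hN
    rwa [Real.norm_eq_abs]
  have hfin := h0.add_const I
  simpa using hfin
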